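/- arXiv:2101.05239 — 3 statements merged into one kernel-verified Lean document; each statement's English description precedes it below -/
import Mathlib

section
/- For vectors w, v ∈ ℝᵈ and scalars b, c ∈ ℝ, the convolution of x ↦ sin(wᵀx + b)·sin(vᵀx + c) with the density of N(0, σ²I_d) equals x ↦ (1/2)·exp(-σ²‖w - v‖²/2)·cos((w - v)ᵀx + b - c) - (1/2)·exp(-σ²‖w + v‖²/2)·cos((w + v)ᵀx + b + c). -/
open MeasureTheory Real

/-- Density of the centered isotropic Gaussian `N(0, σ²I_d)` on `ℝᵈ`. -/
noncomputable def gaussDensity (d : ℕ) (σ : ℝ) (y : Fin d → ℝ) : ℝ :=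
  (2 * Real.pi * σ ^ 2) ^ (-(d : ℝ) / 2) * Real.exp (-(∑ i, y i ^ 2) / (2 * σ ^ 2))

noncomputable def gd1 (σ t : ℝ) : ℝ :=
  (2 * Real.pi * σ ^ 2) ^ (-(1:ℝ) / 2) * Real.exp (-(t ^ 2) / (2 * σ ^ 2))

lemma cexp_aux (c z w : ℂ) : Complex.exp z * (c * Complex.exp w) = c * Complex.exp (z + w) := by
  rw [Complex.exp_add]; ring

lemma int1 (σ : ℝ) (hσ : 0 < σ) (u : ℝ) :
    ∫ t : ℝ, Complex.exp (-(Complex.I * u * t)) * (gd1 σ t : ℂ)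
      = (Real.exp (-(σ ^ 2) * u ^ 2 / 2) : ℂ) := by
  have h2 : (0:ℝ) < 2 * Real.pi * σ ^ 2 := by positivity
  have hb : (0:ℝ) < (1 / (2 * σ ^ 2) : ℂ).re := by
    simp only [← Complex.ofReal_ofNat, ← Complex.ofReal_pow, ← Complex.ofReal_mul,
      ← Complex.ofReal_one, ← Complex.ofReal_div, Complex.ofReal_re]
    positivity
  have key := fourierIntegral_gaussian (b := (1 / (2 * σ ^ 2) : ℂ)) hb (-u : ℂ)
  have hfun : (fun t : ℝ => Complex.exp (-(Complex.I * u * t)) * (gd1 σ t : ℂ))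
      = fun t : ℝ => ((2 * Real.pi * σ ^ 2) ^ (-(1:ℝ) / 2) : ℝ) *
        (Complex.exp (Complex.I * (-u : ℂ) * t) * Complex.exp (-(1 / (2 * σ ^ 2) : ℂ) * t ^ 2)) := by
    funext t
    simp only [gd1, Complex.ofReal_mul, Complex.ofReal_exp]
    rw [cexp_aux, ← Complex.exp_add]
    congr 1
    push_cast
    ring
  rw [hfun, MeasureTheory.integral_const_mul, key]
  have h1 : ((Real.pi : ℂ) / (1 / (2 * σ ^ 2) : ℂ)) = ((2 * Real.pi * σ ^ 2 : ℝ) : ℂ) := by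
    push_cast; field_simp
  rw [h1]
  have h3 : (((2 * Real.pi * σ ^ 2 : ℝ) : ℂ)) ^ (1 / 2 : ℂ)
      = (((2 * Real.pi * σ ^ 2) ^ ((1:ℝ)/2) : ℝ) : ℂ) := by
    rw [show ((1:ℂ)/2) = (((1:ℝ)/2 : ℝ) : ℂ) by norm_num, ← Complex.ofReal_cpow h2.le]
  rw [h3]
  have h4 : (-(-u : ℂ) ^ 2 / (4 * (1 / (2 * σ ^ 2) : ℂ))) = ((-(σ ^ 2) * u ^ 2 / 2 : ℝ) : ℂ) := by
    have : (σ : ℂ) ≠ 0 := by exact_mod_cast hσ.ne'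
    push_cast; field_simp; ring
  rw [h4, ← Complex.ofReal_exp, ← Complex.ofReal_mul, ← Complex.ofReal_mul]
  congr 1
  rw [← mul_assoc, ← Real.rpow_add h2]
  norm_num

lemma int1_integrable (σ : ℝ) (hσ : 0 < σ) (u : ℝ) :
    Integrable (fun t : ℝ => Complex.exp (-(Complex.I * u * t)) * (gd1 σ t : ℂ)) := by
  have hb : (0:ℝ) < (1 / (2 * σ ^ 2) : ℂ).re := by
    simp only [← Complex.ofReal_ofNat, ← Complex.ofReal_pow, ← Complex.ofReal_mul,
      ← Complex.ofReal_one, ← Complex.ofReal_div, Complex.ofReal_re]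
    positivity
  have hint := (integrable_cexp_quadratic hb (-(Complex.I * u)) 0).const_mul
    (((2 * Real.pi * σ ^ 2) ^ (-(1:ℝ) / 2) : ℝ) : ℂ)
  refine hint.congr ?_
  filter_upwards with t
  simp only [gd1, Complex.ofReal_mul, Complex.ofReal_exp]
  rw [cexp_aux]
  congr 1
  push_cast
  ring

lemma gauss_prod (d : ℕ) (σ : ℝ) (hσ : 0 < σ) (y : Fin d → ℝ) :
    gaussDensity d σ y = ∏ i, gd1 σ (y i) := by
  have h2 : (0:ℝ) < 2 * Real.pi * σ ^ 2 := by positivity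
  simp only [gaussDensity, gd1, Finset.prod_mul_distrib, Finset.prod_const, Finset.card_univ,
    Fintype.card_fin, ← Real.exp_sum]
  congr 1
  · rw [← Real.rpow_natCast ((2 * Real.pi * σ ^ 2) ^ (-(1:ℝ)/2)) d, ← Real.rpow_mul h2.le]
    congr 1; ring
  · congr 1
    rw [← Finset.sum_div, ← Finset.sum_neg_distrib]

noncomputable def Fc (d : ℕ) (σ : ℝ) (u : Fin d → ℝ) (θ : ℝ) (y : Fin d → ℝ) : ℂ :=
  Complex.exp ((θ:ℂ) * Complex.I) *
    ∏ i, (Complex.exp (-(Complex.I * u i * y i)) * (gd1 σ (y i) : ℂ))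

lemma Fc_integrable (d : ℕ) (σ : ℝ) (hσ : 0 < σ) (u : Fin d → ℝ) (θ : ℝ) :
    Integrable (Fc d σ u θ) := by
  exact (Integrable.fintype_prod (f := fun i (t : ℝ) =>
    Complex.exp (-(Complex.I * u i * t)) * (gd1 σ t : ℂ))
    (fun i => int1_integrable σ hσ (u i))).const_mul _

lemma re_aux (r g : ℝ) : (Complex.exp ((r:ℂ) * Complex.I) * (g:ℂ)).re = Real.cos r * g := by
  rw [Complex.mul_re]
  simp [Complex.exp_ofReal_mul_I_re]

lemma Fc_re (d : ℕ) (σ : ℝ) (hσ : 0 < σ) (u : Fin d → ℝ) (θ : ℝ) (y : Fin d → ℝ) :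
    (Fc d σ u θ y).re = Real.cos (θ - ∑ i, u i * y i) * gaussDensity d σ y := by
  have hprod : (∏ i, (Complex.exp (-(Complex.I * u i * y i)) * (gd1 σ (y i) : ℂ)))
      = Complex.exp (-(Complex.I * (∑ i, u i * y i : ℝ))) * (gaussDensity d σ y : ℂ) := by
    rw [Finset.prod_mul_distrib, ← Complex.exp_sum, gauss_prod d σ hσ y]
    push_cast
    congr 1
    simp [Finset.sum_neg_distrib, Finset.mul_sum, mul_assoc]
  have h5 : Fc d σ u θ y = Complex.exp (((θ - ∑ i, u i * y i : ℝ) : ℂ) * Complex.I) *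
      (gaussDensity d σ y : ℂ) := by
    rw [Fc, hprod, ← mul_assoc, ← Complex.exp_add]
    congr 2
    push_cast
    ring
  rw [h5, re_aux]

lemma key_cos (d : ℕ) (σ : ℝ) (hσ : 0 < σ) (u : Fin d → ℝ) (θ : ℝ) :
    ∫ y : Fin d → ℝ, Real.cos (θ - ∑ i, u i * y i) * gaussDensity d σ y
      = Real.exp (-(σ ^ 2) * (∑ i, u i ^ 2) / 2) * Real.cos θ := by
  have hint := _root_.integral_re (μ := (volume : Measure (Fin d → ℝ)))
    (Fc_integrable d σ hσ u θ)
  simp_rw [RCLike.re_eq_complex_re] at hint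
  have hI : (∫ y : Fin d → ℝ, Fc d σ u θ y) = Complex.exp ((θ:ℂ) * Complex.I) *
      ((Real.exp (-(σ ^ 2) * (∑ i, u i ^ 2) / 2) : ℝ) : ℂ) := by
    unfold Fc
    rw [MeasureTheory.integral_const_mul, MeasureTheory.integral_fintype_prod_volume_eq_prod
      (f := fun i (t : ℝ) => Complex.exp (-(Complex.I * u i * t)) * (gd1 σ t : ℂ))]
    congr 1
    have h6 : ∀ i : Fin d, (∫ t : ℝ, Complex.exp (-(Complex.I * u i * t)) * (gd1 σ t : ℂ))
        = ((Real.exp (-(σ ^ 2) * (u i) ^ 2 / 2) : ℝ) : ℂ) := fun i => int1 σ hσ (u i)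
    simp_rw [h6, ← Complex.ofReal_prod, ← Real.exp_sum]
    congr 2
    rw [← Finset.sum_div, ← Finset.mul_sum]
  calc ∫ y : Fin d → ℝ, Real.cos (θ - ∑ i, u i * y i) * gaussDensity d σ y
      = ∫ y : Fin d → ℝ, (Fc d σ u θ y).re := by
        congr 1; funext y; rw [Fc_re d σ hσ u θ y]
    _ = (∫ y : Fin d → ℝ, Fc d σ u θ y).re := hint
    _ = Real.exp (-(σ ^ 2) * (∑ i, u i ^ 2) / 2) * Real.cos θ := by
        rw [hI, re_aux]
        ring

lemma cos_integrable (d : ℕ) (σ : ℝ) (hσ : 0 < σ) (u : Fin d → ℝ) (θ : ℝ) :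
    Integrable (fun y : Fin d → ℝ => Real.cos (θ - ∑ i, u i * y i) * gaussDensity d σ y) := by
  refine ((Fc_integrable d σ hσ u θ).re).congr ?_
  filter_upwards with y
  exact Fc_re d σ hσ u θ y

/-- Convolution of `x ↦ sin(wᵀx + b)·sin(vᵀx + c)` with the density of `N(0, σ²I_d)`. -/
theorem sin_mul_sin_conv_gaussian (d : ℕ) (w v : Fin d → ℝ) (b c : ℝ) (σ : ℝ) (hσ : 0 < σ)
    (x : Fin d → ℝ) :
    ∫ y : Fin d → ℝ,
        (Real.sin ((∑ i, w i * (x i - y i)) + b) *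
          Real.sin ((∑ i, v i * (x i - y i)) + c)) * gaussDensity d σ y
      = (1 / 2) * Real.exp (-(σ ^ 2) * (∑ i, (w i - v i) ^ 2) / 2) *
          Real.cos ((∑ i, (w i - v i) * x i) + b - c)
        - (1 / 2) * Real.exp (-(σ ^ 2) * (∑ i, (w i + v i) ^ 2) / 2) *
          Real.cos ((∑ i, (w i + v i) * x i) + b + c) := by
  have h1 : ∀ y : Fin d → ℝ,
      (Real.sin ((∑ i, w i * (x i - y i)) + b) *
        Real.sin ((∑ i, v i * (x i - y i)) + c)) * gaussDensity d σ y
      = (1/2) * (Real.cos ((((∑ i, (w i - v i) * x i) + b - c)) - ∑ i, (w i - v i) * y i)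
            * gaussDensity d σ y)
        - (1/2) * (Real.cos ((((∑ i, (w i + v i) * x i) + b + c)) - ∑ i, (w i + v i) * y i)
            * gaussDensity d σ y) := by
    intro y
    have e1 : (((∑ i, w i * (x i - y i)) + b) - ((∑ i, v i * (x i - y i)) + c))
        = (((∑ i, (w i - v i) * x i) + b - c)) - ∑ i, (w i - v i) * y i := by
      simp only [mul_sub, sub_mul, add_mul, Finset.sum_sub_distrib]
      ring
    have e2 : (((∑ i, w i * (x i - y i)) + b) + ((∑ i, v i * (x i - y i)) + c))
        = (((∑ i, (w i + v i) * x i) + b + c)) - ∑ i, (w i + v i) * y i := by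
      simp only [mul_sub, sub_mul, add_mul, Finset.sum_sub_distrib, Finset.sum_add_distrib]
      ring
    have e3 : ∀ A B : ℝ, Real.sin A * Real.sin B
        = (Real.cos (A - B) - Real.cos (A + B)) / 2 := by
      intro A B
      rw [Real.cos_sub, Real.cos_add]
      ring
    rw [e3, e1, e2]
    ring
  simp_rw [h1]
  rw [MeasureTheory.integral_sub
    ((cos_integrable d σ hσ (fun i => w i - v i) _).const_mul _)
    ((cos_integrable d σ hσ (fun i => w i + v i) _).const_mul _),
    MeasureTheory.integral_const_mul, MeasureTheory.integral_const_mul,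
    key_cos d σ hσ, key_cos d σ hσ]
  ring
end

section
/- For w ∈ ℝᵈ and a positive definite matrix Σ, the convolution of x ↦ wᵀΣ⁻¹(x - μ)·sin(wᵀx) with the density of N(0, σ²I_d) equals x ↦ exp(-σ²‖w‖²/2)·wᵀΣ⁻¹[(x - μ)·sin(wᵀx) + σ²·w·cos(wᵀx)]. -/
open MeasureTheory Real Matrix

open Complex Filter intervalIntegral

lemma integrable_mul_cexp_quadratic {b : ℂ} (hb : b.re < 0) (c : ℂ) :
    Integrable fun x : ℝ => (x : ℂ) * Complex.exp (b * x ^ 2 + c * x) := by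
  have hb2 : 0 < (-(b/2)).re := by simp [div_re]; linarith
  have h0 : Integrable fun x : ℝ => (x:ℂ) * Complex.exp (-(-(b/2)) * x^2) :=
    integrable_mul_cexp_neg_mul_sq hb2
  rw [show -(-(b/2)) = b/2 by ring] at h0
  set M := Real.exp (c.re^2 / (-2 * b.re)) with hM
  refine (h0.norm.const_mul M).mono' ?_ ?_
  · apply Continuous.aestronglyMeasurable
    continuity
  · filter_upwards with x
    have h1 : (b * (x:ℂ) ^ 2 + c * x).re = b.re * x^2 + c.re * x := by
      simp [Complex.add_re, Complex.mul_re, ← Complex.ofReal_pow]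
    have h2 : (b/2 * (x:ℂ) ^ 2).re = b.re/2 * x^2 := by
      simp [Complex.mul_re, Complex.div_re, Complex.normSq, ← Complex.ofReal_pow]
    rw [norm_mul, norm_mul,
      Complex.norm_exp, Complex.norm_exp, h1, h2,
      mul_comm M, mul_assoc]
    gcongr
    rw [hM, ← Real.exp_add, Real.exp_le_exp]
    have hkey : 0 ≤ (b.re * x + c.re)^2 := sq_nonneg _
    have hb' : (0:ℝ) < -2 * b.re := by linarith
    have h3 : c.re^2/(-2*b.re) * (-2*b.re) = c.re^2 := div_mul_cancel₀ _ (ne_of_gt hb')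
    nlinarith [hkey, hb', h3]

lemma hasDerivAt_cexp_quadratic (b c : ℂ) (x : ℝ) :
    HasDerivAt (fun x : ℝ => Complex.exp (b * x ^ 2 + c * x))
      ((2 * b * x + c) * Complex.exp (b * x ^ 2 + c * x)) x := by
  have h : HasDerivAt (fun z : ℂ => b * z ^ 2 + c * z) (2 * b * x + c) (x : ℂ) := by
    have h1 : HasDerivAt (fun z : ℂ => b * z ^ 2) (b * (2 * x)) (x:ℂ) :=
      (hasDerivAt_pow 2 (x:ℂ)).const_mul b |>.congr_deriv (by push_cast; ring)
    have h2 : HasDerivAt (fun z : ℂ => c * z) c (x:ℂ) :=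
      (hasDerivAt_id (x:ℂ)).const_mul c |>.congr_deriv (by ring)
    exact (h1.add h2).congr_deriv (by ring)
  exact (h.comp_ofReal).cexp.congr_deriv (by ring)

lemma cexp_quadratic_tendsto_zero {b : ℂ} (hb : b.re < 0) (c : ℂ) :
    Tendsto (fun T : ℝ => Complex.exp (b * T ^ 2 + c * T)) atTop (nhds 0) := by
  rw [tendsto_zero_iff_norm_tendsto_zero]
  have h : ∀ T : ℝ, ‖Complex.exp (b * T ^ 2 + c * T)‖ = Real.exp (b.re * T^2 + c.re * T) := by
    intro T
    rw [Complex.norm_exp]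
    congr 1
    simp [Complex.add_re, Complex.mul_re, ← Complex.ofReal_pow]
  simp_rw [h]
  apply Real.tendsto_exp_atBot.comp
  have : ∀ T : ℝ, b.re * T^2 + c.re * T = T * (b.re * T + c.re) := by intro T; ring
  simp_rw [this]
  apply Tendsto.atTop_mul_atBot₀ tendsto_id
  apply Filter.tendsto_atBot_add_const_right
  exact (tendsto_id.const_mul_atTop_of_neg hb)

lemma integrable_cexp_quad' {b : ℂ} (hb : b.re < 0) (c : ℂ) :
    Integrable fun x : ℝ => Complex.exp (b * x ^ 2 + c * x) := by
  have := integrable_cexp_quadratic' hb c 0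
  simpa using this

lemma integral_deriv_cexp_quadratic_zero {b : ℂ} (hb : b.re < 0) (c : ℂ) :
    ∫ x : ℝ, (2 * b * x + c) * Complex.exp (b * x ^ 2 + c * x) = 0 := by
  have hint : Integrable fun x : ℝ => (2 * b * x + c) * Complex.exp (b * x ^ 2 + c * x) := by
    have h1 := (integrable_mul_cexp_quadratic hb c).const_mul (2 * b)
    have h2 := (integrable_cexp_quad' hb c).const_mul c
    apply (h1.add h2).congr
    filter_upwards with x
    simp only [Pi.add_apply]
    ring
  have hT : ∀ T : ℝ, ∫ x in -T..T, (2 * b * x + c) * Complex.exp (b * x ^ 2 + c * x)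
      = Complex.exp (b * T ^ 2 + c * T) - Complex.exp (b * (-T) ^ 2 + c * (-T)) := by
    intro T
    rw [intervalIntegral.integral_eq_sub_of_hasDerivAt
      (fun x _ => hasDerivAt_cexp_quadratic b c x) hint.intervalIntegrable]
    push_cast
    ring_nf
  refine tendsto_nhds_unique
    (intervalIntegral_tendsto_integral hint tendsto_neg_atTop_atBot tendsto_id) ?_
  simp_rw [id, hT]
  have h1 := cexp_quadratic_tendsto_zero hb c
  have h2 : Tendsto (fun T : ℝ => Complex.exp (b * (-T) ^ 2 + c * (-T))) atTop (nhds 0) := by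
    have := cexp_quadratic_tendsto_zero hb (-c)
    apply this.congr
    intro T; push_cast; ring_nf
  simpa using h1.sub h2

lemma integral_mul_cexp_quadratic {b : ℂ} (hb : b.re < 0) (c : ℂ) :
    ∫ x : ℝ, (x:ℂ) * Complex.exp (b * x ^ 2 + c * x)
      = -(c/(2*b)) * ((Real.pi/(-b)) ^ (1/2 : ℂ) * Complex.exp (-c^2 / (4*b))) := by
  have hb0 : b ≠ 0 := fun h => by simp [h] at hb
  have key := integral_deriv_cexp_quadratic_zero hb c
  have hsplit : ∫ x : ℝ, (2 * b * x + c) * Complex.exp (b * x ^ 2 + c * x)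
      = 2 * b * (∫ x : ℝ, (x:ℂ) * Complex.exp (b * x ^ 2 + c * x))
        + c * (∫ x : ℝ, Complex.exp (b * x ^ 2 + c * x)) := by
    rw [← MeasureTheory.integral_const_mul, ← MeasureTheory.integral_const_mul,
      ← MeasureTheory.integral_add ((integrable_mul_cexp_quadratic hb c).const_mul _)
        ((integrable_cexp_quad' hb c).const_mul _)]
    congr 1; ext x; ring
  rw [hsplit] at key
  have hval : ∫ x : ℝ, Complex.exp (b * x ^ 2 + c * x)
      = (Real.pi/(-b)) ^ (1/2 : ℂ) * Complex.exp (-c^2 / (4*b)) := by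
    have := integral_cexp_quadratic hb c 0
    simpa [zero_sub, neg_div] using this
  rw [hval] at key
  have h2b : (2:ℂ) * b ≠ 0 := by simp [hb0]
  field_simp at key ⊢
  linear_combination key

variable {σ : ℝ}

lemma hbre (hσ : 0 < σ) : (((-(1/(2*σ^2)) : ℝ) : ℂ)).re < 0 := by
  simp only [Complex.ofReal_re]
  have : 0 < 1/(2*σ^2) := by positivity
  linarith

lemma const_pi_div (hσ : 0 < σ) :
    ((Real.pi : ℂ) / -(((-(1/(2*σ^2)) : ℝ) : ℂ))) = ((2*Real.pi*σ^2 : ℝ) : ℂ) := by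
  have hσ2 : (σ:ℂ) ≠ 0 := Complex.ofReal_ne_zero.mpr hσ.ne'
  push_cast
  field_simp

lemma const_cpow (hσ : 0 < σ) :
    (((2*Real.pi*σ^2 : ℝ) : ℂ)) ^ (1/2 : ℂ) = (((2*Real.pi*σ^2) ^ ((1:ℝ)/2) : ℝ) : ℂ) := by
  rw [Complex.ofReal_cpow (by positivity)]
  norm_num

lemma const_exp_arg (hσ : 0 < σ) (t : ℝ) :
    -(-(I*(t:ℂ)))^2 / (4 * (((-(1/(2*σ^2)) : ℝ) : ℂ))) = ((-(σ^2*t^2)/2 : ℝ) : ℂ) := by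
  have hσ2 : (σ:ℂ) ≠ 0 := Complex.ofReal_ne_zero.mpr hσ.ne'
  have hI : (I:ℂ)^2 = -1 := Complex.I_sq
  push_cast
  field_simp
  linear_combination (4*(t:ℂ)^2) * hI

lemma c1_mul (hσ : 0 < σ) :
    ((2*Real.pi*σ^2) ^ (-(1:ℝ)/2)) * ((2*Real.pi*σ^2) ^ ((1:ℝ)/2)) = 1 := by
  rw [← Real.rpow_add (by positivity)]
  norm_num

lemma gauss_phase_integral (hσ : 0 < σ) (t : ℝ) :
    ∫ u : ℝ, (((2*Real.pi*σ^2) ^ (-(1:ℝ)/2) : ℝ) : ℂ) *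
        Complex.exp ((((-(1/(2*σ^2)) : ℝ) : ℂ)) * u^2 + (-(I*t)) * u)
      = ((Real.exp (-(σ^2*t^2)/2) : ℝ) : ℂ) := by
  rw [MeasureTheory.integral_const_mul]
  have hval : ∫ u : ℝ, Complex.exp ((((-(1/(2*σ^2)) : ℝ) : ℂ)) * u^2 + (-(I*t)) * u)
      = ((Real.pi : ℂ)/(-(((-(1/(2*σ^2)) : ℝ) : ℂ)))) ^ (1/2 : ℂ) *
        Complex.exp (-(-(I*t))^2 / (4*(((-(1/(2*σ^2)) : ℝ) : ℂ)))) := by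
    have := integral_cexp_quadratic (hbre hσ) (-(I*t)) 0
    simpa [zero_sub, neg_div] using this
  rw [hval, const_pi_div hσ, const_cpow hσ, const_exp_arg hσ t, ← Complex.ofReal_exp,
    ← Complex.ofReal_mul, ← Complex.ofReal_mul]
  rw [← mul_assoc, c1_mul hσ, one_mul]

lemma gauss_phase_integral_mul (hσ : 0 < σ) (t : ℝ) :
    ∫ u : ℝ, (((2*Real.pi*σ^2) ^ (-(1:ℝ)/2) : ℝ) : ℂ) *
        ((u:ℂ) * Complex.exp ((((-(1/(2*σ^2)) : ℝ) : ℂ)) * u^2 + (-(I*t)) * u))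
      = -(I*(σ^2*t)) * ((Real.exp (-(σ^2*t^2)/2) : ℝ) : ℂ) := by
  rw [MeasureTheory.integral_const_mul, integral_mul_cexp_quadratic (hbre hσ) (-(I*t))]
  rw [const_pi_div hσ, const_cpow hσ, const_exp_arg hσ t, ← Complex.ofReal_exp]
  have hc : -((-(I*(t:ℂ)))/(2*(((-(1/(2*σ^2)) : ℝ) : ℂ)))) = -(I*(σ^2*t)) := by
    have hσ2 : (σ:ℂ) ≠ 0 := Complex.ofReal_ne_zero.mpr hσ.ne'
    push_cast
    field_simp
  rw [hc]
  rw [show ∀ (A B C : ℂ), A * (-(I*((σ:ℂ)^2*t)) * (B * C)) = -(I*((σ:ℂ)^2*(t:ℂ))) * ((A*B) * C)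
    from by intros; ring, ← Complex.ofReal_mul, c1_mul hσ, Complex.ofReal_one, one_mul]

/-- Convolution of `x ↦ wᵀΣ⁻¹(x - μ)·sin(wᵀx)` with the density of `N(0, σ²I_d)`. -/
theorem linear_sin_conv_gaussian (d : ℕ) (w μ : Fin d → ℝ)
    (S : Matrix (Fin d) (Fin d) ℝ) (hS : S.PosDef) (σ : ℝ) (hσ : 0 < σ) (x : Fin d → ℝ) :
    ∫ y : Fin d → ℝ,
        ((∑ i, w i * (S⁻¹.mulVec (fun k => (x k - y k) - μ k)) i) *
          Real.sin (∑ k, w k * (x k - y k))) * gaussDensity d σ y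
      = Real.exp (-(σ ^ 2) * (∑ i, w i ^ 2) / 2) *
          (∑ i, w i * (S⁻¹.mulVec
            (fun k => (x k - μ k) * Real.sin (∑ j, w j * x j)
              + σ ^ 2 * w k * Real.cos (∑ j, w j * x j))) i) := by
  set A := S⁻¹ with hA
  set θ : ℝ := ∑ j, w j * x j with hθ
  set a : ℝ := ∑ i, w i * (A.mulVec fun k => x k - μ k) i with ha
  set v : Fin d → ℝ := fun k => ∑ i, w i * A i k with hv
  set c1 : ℝ := (2*Real.pi*σ^2) ^ (-(1:ℝ)/2) with hc1
  set b : ℂ := ((-(1/(2*σ^2)) : ℝ) : ℂ) with hb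
  set ψ : ℝ → ℝ → ℂ := fun t u => (c1 : ℂ) * Complex.exp (b * u^2 + (-(I*t)) * u) with hψ
  set E : ℝ → ℝ := fun t => Real.exp (-(σ^2*t^2)/2) with hE
  set Etot : ℝ := Real.exp (-(σ^2*(∑ i, w i^2))/2) with hEtot
  have hbre' : b.re < 0 := hbre hσ
  -- 1D facts
  have hψint : ∀ t, Integrable (ψ t) := fun t =>
    (integrable_cexp_quad' hbre' _).const_mul _
  have hψval : ∀ t, ∫ u, ψ t u = ((E t : ℝ) : ℂ) := fun t => gauss_phase_integral hσ t
  have huψint : ∀ t, Integrable (fun u : ℝ => (u:ℂ) * ψ t u) := by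
    intro t
    apply ((integrable_mul_cexp_quadratic hbre' (-(I*t))).const_mul (c1:ℂ)).congr
    filter_upwards with u
    simp only [hψ]
    ring
  have huψval : ∀ t, ∫ u : ℝ, (u:ℂ) * ψ t u = -(I*(σ^2*t)) * ((E t : ℝ) : ℂ) := by
    intro t
    rw [show (fun u : ℝ => (u:ℂ) * ψ t u)
        = fun u : ℝ => (c1 : ℂ) * ((u:ℂ) * Complex.exp (b * u^2 + (-(I*t)) * u)) from by
      ext u; simp only [hψ]; ring]
    exact gauss_phase_integral_mul hσ t
  -- products
  set P : (Fin d → ℝ) → ℂ := fun y => ∏ j, ψ (w j) (y j) with hP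
  set G : Fin d → Fin d → ℝ → ℂ :=
    fun k j u => (if j = k then (u:ℂ) else 1) * ψ (w j) u with hG
  set Q : Fin d → (Fin d → ℝ) → ℂ := fun k y => ∏ j, G k j (y j) with hQdef
  have hQ : ∀ k y, Q k y = (y k : ℂ) * P y := by
    intro k y
    simp only [hQdef, hG, hP, Finset.prod_mul_distrib]
    congr 1
    simp [Fintype.prod_ite_eq']
  -- density factorization
  have hdens : ∀ y : Fin d → ℝ,
      ((gaussDensity d σ y : ℝ) : ℂ) * Complex.exp (-(I * ((∑ k, w k * y k : ℝ) : ℂ)))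
        = P y := by
    intro y
    have hc1d : (2*Real.pi*σ^2) ^ (-(d:ℝ)/2) = c1 ^ d := by
      rw [hc1, ← Real.rpow_natCast ((2*Real.pi*σ^2) ^ (-(1:ℝ)/2)) d,
        ← Real.rpow_mul (by positivity)]
      congr 1
      ring
    simp only [hP, hψ, Finset.prod_mul_distrib, ← Complex.exp_sum, gaussDensity, hc1d]
    rw [Finset.prod_const, Finset.card_univ, Fintype.card_fin]
    push_cast
    rw [mul_assoc, ← Complex.exp_add]
    congr 2
    rw [hb]
    rw [Finset.sum_add_distrib]
    push_cast [Finset.mul_sum]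
    have hσc : (σ:ℂ) ≠ 0 := Complex.ofReal_ne_zero.mpr hσ.ne'
    field_simp
    ring_nf
    congr 1
    rw [Finset.mul_sum]
    have hterm : ∀ j : Fin d, (σ:ℂ)^2 * (-(y j:ℂ)^2 / ((σ:ℂ)^2 * 2)) = -(y j:ℂ)^2 / 2 := by
      intro j
      rw [mul_div_assoc']
      rw [show (σ:ℂ)^2 * -(y j:ℂ)^2 = -(y j:ℂ)^2/2 * ((σ:ℂ)^2*2) from by ring]
      exact mul_div_cancel_right₀ _ (mul_ne_zero (pow_ne_zero 2 hσc) two_ne_zero)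
    rw [← Finset.mul_sum, ← Finset.sum_mul, ← Finset.sum_mul, Finset.sum_neg_distrib]
    have hσσ : (σ:ℂ)^2 * (σ:ℂ)⁻¹^2 = 1 := by rw [← mul_pow, mul_inv_cancel₀ hσc, one_pow]
    linear_combination (∑ x, (y x:ℂ)^2) * hσσ
  -- pointwise identity for the integrand
  have hlin : ∀ y : Fin d → ℝ,
      (∑ i, w i * (A.mulVec fun k => (x k - y k) - μ k) i) = a - ∑ k, v k * y k := by
    intro y
    simp only [ha, hv, Matrix.mulVec, dotProduct, Finset.mul_sum, Finset.sum_mul]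
    rw [Finset.sum_comm (f := fun k i => w i * A i k * y k)]
    rw [← Finset.sum_sub_distrib]
    congr 1; ext i
    rw [← Finset.sum_sub_distrib]
    congr 1; ext k
    ring
  have htheta : ∀ y : Fin d → ℝ, ∑ k, w k * (x k - y k) = θ - ∑ k, w k * y k := by
    intro y
    simp only [hθ, mul_sub, Finset.sum_sub_distrib]
  have him : ∀ r s ρ : ℝ, (((r:ℂ)) * Complex.exp ((s:ℂ)*I) * (ρ:ℂ)).im
      = r * Real.sin s * ρ := by
    intro r s ρ
    rw [Complex.exp_mul_I]
    rw [show ((r:ℂ) * (Complex.cos s + Complex.sin s * I) * (ρ:ℂ))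
        = ((r*Real.cos s*ρ : ℝ):ℂ) + ((r*Real.sin s*ρ : ℝ):ℂ)*I from by
      rw [← Complex.ofReal_cos, ← Complex.ofReal_sin]; push_cast; ring]
    simp only [Complex.add_im, Complex.ofReal_im, Complex.mul_im, Complex.ofReal_re,
      Complex.I_im, Complex.I_re, mul_one, mul_zero, add_zero, zero_add]
  set F : (Fin d → ℝ) → ℂ := fun y =>
    Complex.exp ((θ:ℂ) * I) * (((a : ℝ) : ℂ) * P y - ∑ k, ((v k : ℝ) : ℂ) * Q k y) with hF
  have hFalt : ∀ y : Fin d → ℝ, F y = (((a - ∑ k, v k * y k : ℝ)) : ℂ) *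
      Complex.exp (((θ - ∑ k, w k * y k : ℝ) : ℂ) * I) * ((gaussDensity d σ y : ℝ) : ℂ) := by
    intro y
    rw [hF]
    simp only [hQ]
    have h2 : (((a:ℝ):ℂ) * P y - ∑ k, ((v k:ℝ):ℂ) * ((y k:ℂ) * P y))
        = (((a - ∑ k, v k * y k : ℝ)) : ℂ) * P y := by
      push_cast
      simp_rw [← mul_assoc]
      rw [← Finset.sum_mul]
      ring
    rw [h2, ← hdens y]
    rw [show (((θ - ∑ k, w k * y k : ℝ)) : ℂ) * I
        = (θ:ℂ)*I + (-(I * ((∑ k, w k * y k : ℝ) : ℂ))) from by push_cast; ring,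
      Complex.exp_add]
    ring
  have hpoint : ∀ y : Fin d → ℝ,
      ((∑ i, w i * (A.mulVec (fun k => (x k - y k) - μ k)) i) *
          Real.sin (∑ k, w k * (x k - y k))) * gaussDensity d σ y = (F y).im := by
    intro y
    rw [hlin y, htheta y, hFalt y, him]
  -- integrability
  have hPint : Integrable P :=
    MeasureTheory.Integrable.fintype_prod (f := fun j => ψ (w j)) (fun j => hψint (w j))
  have hGint : ∀ k j, Integrable (G k j) := by
    intro k j
    by_cases h : j = k
    · have := huψint (w j)
      simpa [hG, h] using this
    · have := hψint (w j)
      simpa [hG, h] using this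
  have hQint : ∀ k, Integrable (Q k) := fun k =>
    MeasureTheory.Integrable.fintype_prod (f := G k) (fun j => hGint k j)
  have hsumint : Integrable (fun y => ∑ k, ((v k : ℝ) : ℂ) * Q k y) :=
    integrable_finset_sum _ (fun k _ => (hQint k).const_mul _)
  have hFint : Integrable F := by
    have h1 : Integrable (fun y => ((a:ℝ):ℂ) * P y - ∑ k, ((v k : ℝ) : ℂ) * Q k y) :=
      (hPint.const_mul _).sub hsumint
    have h2 := h1.const_mul (Complex.exp ((θ:ℂ) * I))
    apply h2.congr
    filter_upwards with y
    rw [hF]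
  -- values
  have hEprod : (∏ j, ((E (w j) : ℝ) : ℂ)) = ((Etot : ℝ) : ℂ) := by
    rw [← Complex.ofReal_prod]
    congr 1
    rw [hE, hEtot, ← Real.exp_sum]
    congr 1
    rw [Finset.mul_sum]
    simp [neg_div, Finset.sum_div]
  have hPval : ∫ y, P y = ((Etot:ℝ):ℂ) := by
    rw [hP, MeasureTheory.integral_fintype_prod_volume_eq_prod (ι := Fin d) (fun j => ψ (w j))]
    simp_rw [hψval]
    exact hEprod
  have hQval : ∀ k, ∫ y, Q k y = -(I*(σ^2* w k)) * ((Etot:ℝ):ℂ) := by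
    intro k
    rw [hQdef, MeasureTheory.integral_fintype_prod_volume_eq_prod (ι := Fin d) (G k)]
    have hj : ∀ j, ∫ u, G k j u
        = (if j = k then -(I*(σ^2*w j)) else 1) * ((E (w j):ℝ):ℂ) := by
      intro j
      by_cases h : j = k
      · rw [show (fun u : ℝ => G k j u) = fun u : ℝ => (u:ℂ) * ψ (w j) u from by
          ext u; simp [hG, h]]
        rw [huψval (w j)]
        simp [h]
      · rw [show (fun u : ℝ => G k j u) = ψ (w j) from by ext u; simp [hG, h]]
        rw [hψval (w j)]
        simp [h]
    simp_rw [hj]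
    rw [Finset.prod_mul_distrib, Fintype.prod_ite_eq' k (fun j => -(I*(σ^2*w j))), hEprod]
  have hIF : ∫ y, F y = Complex.exp ((θ:ℂ)*I) *
      (((a*Etot : ℝ):ℂ) + ((σ^2*(∑ k, v k * w k)*Etot : ℝ):ℂ) * I) := by
    rw [hF]
    rw [MeasureTheory.integral_const_mul,
      MeasureTheory.integral_sub (hPint.const_mul _) hsumint,
      MeasureTheory.integral_const_mul,
      MeasureTheory.integral_finset_sum _ (fun k _ => (hQint k).const_mul _)]
    simp_rw [MeasureTheory.integral_const_mul]
    rw [hPval]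
    simp_rw [hQval]
    congr 1
    push_cast
    have hterm : ∀ k : Fin d, (v k:ℂ) * (-(I*((σ:ℂ)^2*(w k:ℂ)))*(Etot:ℂ))
        = -(((v k:ℂ)*(w k:ℂ)) * ((σ:ℂ)^2*(Etot:ℂ)*I)) := fun k => by ring
    simp_rw [hterm]
    rw [Finset.sum_neg_distrib, ← Finset.sum_mul]
    ring
  -- conclude
  calc ∫ y : Fin d → ℝ,
        ((∑ i, w i * (A.mulVec (fun k => (x k - y k) - μ k)) i) *
          Real.sin (∑ k, w k * (x k - y k))) * gaussDensity d σ y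
      = ∫ y : Fin d → ℝ, (F y).im := by
        apply MeasureTheory.integral_congr_ae
        filter_upwards with y using hpoint y
    _ = (∫ y, F y).im := by
        have := integral_im hFint
        simpa using this
    _ = Real.exp (-(σ ^ 2) * (∑ i, w i ^ 2) / 2) *
          (∑ i, w i * (A.mulVec
            (fun k => (x k - μ k) * Real.sin θ + σ ^ 2 * w k * Real.cos θ)) i) := by
        rw [hIF]
        have him2 : ∀ p q s : ℝ, (Complex.exp ((s:ℂ)*I) * ((p:ℂ) + (q:ℂ)*I)).im
            = Real.sin s * p + Real.cos s * q := by
          intro p q s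
          have hI : (I:ℂ)*I = -1 := Complex.I_mul_I
          rw [Complex.exp_mul_I]
          rw [show ((Complex.cos s + Complex.sin s * I) * ((p:ℂ) + (q:ℂ)*I))
              = ((Real.cos s * p - Real.sin s * q : ℝ):ℂ)
                + ((Real.sin s * p + Real.cos s * q : ℝ):ℂ)*I from by
            rw [← Complex.ofReal_cos, ← Complex.ofReal_sin]
            generalize Real.cos s = C
            generalize Real.sin s = Sn
            push_cast
            linear_combination ((Sn : ℂ) * (q:ℂ)) * hI]
          simp only [Complex.add_im, Complex.ofReal_im, Complex.mul_im, Complex.ofReal_re,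
            Complex.I_im, Complex.I_re, mul_one, mul_zero, add_zero, zero_add]
        rw [him2]
        rw [show -(σ^2) * (∑ i, w i^2)/2 = -(σ^2*(∑ i, w i^2))/2 from by ring, ← hEtot]
        have hRHS : (∑ i, w i * (A.mulVec
              (fun k => (x k - μ k) * Real.sin θ + σ ^ 2 * w k * Real.cos θ)) i)
            = a * Real.sin θ + σ^2 * Real.cos θ * ∑ k, v k * w k := by
          simp only [ha, hv, Matrix.mulVec, dotProduct, mul_add, Finset.mul_sum,
            Finset.sum_add_distrib, Finset.sum_mul]
          congr 1
          · congr 1; ext i; congr 1; ext k; ring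
          · rw [Finset.sum_comm]
            apply Finset.sum_congr rfl; intro i _
            apply Finset.sum_congr rfl; intro k _
            ring
        rw [hRHS]
        ring
    _ = _ := rfl
end

section
/- Let V : ℝᵐ → ℝ be convex and differentiable, H a Hilbert space, φ₁,…,φ_m ∈ H, λ > 0, and J(f) = V(⟨φ₁,f⟩,…,⟨φ_m,f⟩) + (λ/2)‖f‖². If f* minimizes J over H, then f* lies in the span of {φ₁,…,φ_m}; specifically f* = -(1/λ)Σᵢ (∂ᵢV)(Af*)·φᵢ where A f = (⟨φᵢ,f⟩)ᵢ. -/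
open Finset

/-- Representer-type theorem: the minimizer of
`J(f) = V(⟨φ₁,f⟩,…,⟨φ_m,f⟩) + (λ/2)‖f‖²` over a Hilbert space satisfies
`f* = -(1/λ)Σᵢ (∂ᵢV)(Af*)·φᵢ`, hence lies in the span of the `φᵢ`. -/
theorem minimizer_in_span {H : Type*} [NormedAddCommGroup H] [InnerProductSpace ℝ H]
    [CompleteSpace H] (m : ℕ) (V : (Fin m → ℝ) → ℝ)
    (hVconv : ConvexOn ℝ Set.univ V) (hVdiff : Differentiable ℝ V)
    (φ : Fin m → H) (lam : ℝ) (hlam : 0 < lam)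
    (J : H → ℝ)
    (hJ : J = fun f => V (fun i => (inner ℝ (φ i) f : ℝ)) + lam / 2 * ‖f‖ ^ 2)
    (fstar : H) (hmin : ∀ f, J fstar ≤ J f) :
    fstar = -(1 / lam) •
      ∑ i, (fderiv ℝ V (fun i => (inner ℝ (φ i) fstar : ℝ)) (Pi.single i 1)) • φ i := by
  -- the sampling operator
  set A : H →L[ℝ] (Fin m → ℝ) := ContinuousLinearMap.pi (fun i => innerSL ℝ (φ i)) with hA
  have hAapp : ∀ f, A f = fun i => (inner ℝ (φ i) f : ℝ) := fun f => rfl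
  set D : (Fin m → ℝ) →L[ℝ] ℝ := fderiv ℝ V (A fstar) with hD
  -- derivative of J at fstar
  have h1 : HasFDerivAt (fun f : H => V (A f)) (D.comp A) fstar :=
    (hVdiff (A fstar)).hasFDerivAt.comp fstar A.hasFDerivAt
  have h2 : HasFDerivAt (fun f : H => ‖f‖ ^ 2) (2 • (innerSL ℝ fstar)) fstar := by
    simpa using (hasFDerivAt_id fstar).norm_sq
  have hJd : HasFDerivAt J (D.comp A + (lam / 2) • (2 • (innerSL ℝ fstar))) fstar := by
    rw [hJ]
    exact h1.add (h2.const_smul (lam / 2) |>.congr_fderiv rfl) |>.congr_fderiv rfl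

  have hloc : IsLocalMin J fstar := Filter.Eventually.of_forall hmin
  have hzero := hloc.hasFDerivAt_eq_zero hJd
  have key : ∀ h : H, D (A h) + lam * (inner ℝ fstar h : ℝ) = 0 := by
    intro h
    have := congrFun (congrArg (fun L : H →L[ℝ] ℝ => (L : H → ℝ)) hzero) h
    simp [ContinuousLinearMap.add_apply] at this
    linarith
  -- rewrite D (A h) as an inner product
  have hDA : ∀ h : H, D (A h) = (inner ℝ (∑ i, D (Pi.single i 1) • φ i) h : ℝ) := by
    intro h
    have hv : A h = ∑ i, (A h i) • (Pi.single i 1 : Fin m → ℝ) := by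
      ext j; simp [Finset.sum_apply, Pi.single_apply]
    rw [hv, map_sum]
    rw [sum_inner]
    refine Finset.sum_congr rfl fun i _ => ?_
    rw [map_smul, real_inner_smul_left]
    simp [hAapp, smul_eq_mul, mul_comm, real_inner_comm]
  have key2 : ∀ h : H, (inner ℝ ((∑ i, D (Pi.single i 1) • φ i) + lam • fstar) h : ℝ) = 0 := by
    intro h
    rw [inner_add_left, real_inner_smul_left]
    rw [← hDA]
    exact key h
  have hvec : (∑ i, D (Pi.single i 1) • φ i) + lam • fstar = 0 := by
    have := key2 ((∑ i, D (Pi.single i 1) • φ i) + lam • fstar)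
    exact inner_self_eq_zero.mp this
  have : lam • fstar = -(∑ i, D (Pi.single i 1) • φ i) := by
    rw [eq_neg_iff_add_eq_zero, add_comm]; exact hvec
  have : fstar = -(1/lam) • (∑ i, D (Pi.single i 1) • φ i) := by
    rw [neg_smul, one_div, ← smul_neg, ← this, inv_smul_smul₀ hlam.ne']
  convert this using 4
  rfl
end
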